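/- Let a Boolean network have two blocks B1 (elementary) and B2 (non-elementary with parent B1). Then A is an attractor of the global transition system if and only if A|B1 is an attractor A1 of TS_{B1} and A is an attractor of TS_2, the transition system of B2 generated by the strong basin of A1. -/

import Mathlib

/-- Reachability: reflexive-transitive closure of the transition relation. -/
def reach {σ : Type*} (r : σ → σ → Prop) : σ → σ → Prop := Relation.ReflTransGen r

/-- An attractor: a set `A` with `reach(s) = A` for every `s ∈ A`. -/
def IsAttractor {σ : Type*} (r : σ → σ → Prop) (A : Set σ) : Prop :=
  ∀ s ∈ A, {t | reach r s t} = A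

/-- Weak basin of attraction. -/
def basW {σ : Type*} (r : σ → σ → Prop) (A : Set σ) : Set σ :=
  {s | ∃ t ∈ A, reach r s t}

/-- Strong basin of attraction. -/
def basS {σ : Type*} (r : σ → σ → Prop) (A : Set σ) : Set σ :=
  basW r A \ ⋃ A' ∈ {B : Set σ | IsAttractor r B ∧ B ≠ A}, basW r A'

variable {V : Type*} [Fintype V] [DecidableEq V]

/-- Asynchronous (global) transition relation of a Boolean network on node set `V`. -/
def gstep (f : (V → Bool) → V → Bool) (s s' : V → Bool) : Prop :=
  ∃ v, s' = Function.update s v (f s v)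

/-- A block `B` is elementary if the update function of every node of `B`
depends only on the nodes in `B`. -/
def Elem (f : (V → Bool) → V → Bool) (B : Set V) : Prop :=
  ∀ v ∈ B, ∀ s t : V → Bool, (∀ u ∈ B, s u = t u) → f s v = f t v

/-- Projection of a global state to a block. -/
def proj (B : Set V) (s : V → Bool) : {v // v ∈ B} → Bool := fun v => s v.1

/-- Local (asynchronous) transition relation of a block `B`: a node of `B` is updated,
using any global state extending the local one (for elementary `B` this is well defined). -/
def lstep (f : (V → Bool) → V → Bool) (B : Set V)
    (x x' : {v // v ∈ B} → Bool) : Prop :=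
  ∃ v : {v // v ∈ B}, ∃ s : V → Bool, proj B s = x ∧ x' = Function.update x v (f s v.1)

/-- Restriction of a transition relation to a set of states (a sub-transition-system). -/
def rrestrict {σ : Type*} (states : Set σ) (r : σ → σ → Prop) : σ → σ → Prop :=
  fun a b => r a b ∧ a ∈ states ∧ b ∈ states

/-- An attractor of the sub-transition-system with the given state set. -/
def IsAttractorOn {σ : Type*} (states : Set σ) (r : σ → σ → Prop) (A : Set σ) : Prop :=
  A ⊆ states ∧ ∀ s ∈ A, {t | reach (rrestrict states r) s t} = A

/-- Weak basin within a sub-transition-system. -/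
def basWOn {σ : Type*} (states : Set σ) (r : σ → σ → Prop) (A : Set σ) : Set σ :=
  {s | s ∈ states ∧ ∃ t ∈ A, reach (rrestrict states r) s t}

/-- Strong basin within a sub-transition-system. -/
def basSOn {σ : Type*} (states : Set σ) (r : σ → σ → Prop) (A : Set σ) : Set σ :=
  basWOn states r A \
    ⋃ A' ∈ {B : Set σ | IsAttractorOn states r B ∧ B ≠ A}, basWOn states r A'

section Aux

variable {σ : Type*}

lemma reach_mono {r r' : σ → σ → Prop} (h : ∀ a b, r a b → r' a b) {s t : σ}
    (hr : reach r s t) : reach r' s t :=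
  Relation.ReflTransGen.mono h _ _ hr

lemma reach_restrict_of_closed {S A : Set σ} {r : σ → σ → Prop}
    (hcl : ∀ a ∈ A, ∀ b, r a b → b ∈ A) (hAS : A ⊆ S) {s t : σ}
    (hs : s ∈ A) (h : reach r s t) : t ∈ A ∧ reach (rrestrict S r) s t := by
  induction h with
  | refl => exact ⟨hs, Relation.ReflTransGen.refl⟩
  | @tail b c hab hbc ih =>
      obtain ⟨hb, hr⟩ := ih
      have hc : c ∈ A := hcl b hb c hbc
      exact ⟨hc, hr.tail ⟨hbc, hAS hb, hAS hc⟩⟩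

lemma exists_attractor [Finite σ] (r : σ → σ → Prop) (x : σ) :
    ∃ A : Set σ, IsAttractor r A ∧ ∃ t ∈ A, reach r x t := by
  obtain ⟨t, ht, hmin⟩ := Set.exists_min_image {t | reach r x t}
      (fun t => Set.ncard {u | reach r t u}) (Set.toFinite _)
      ⟨x, Relation.ReflTransGen.refl⟩
  have hmax : ∀ u, reach r t u → reach r u t := by
    intro u hu
    have hsub : {w | reach r u w} ⊆ {w | reach r t w} := fun w hw => hu.trans hw
    have hle : Set.ncard {w | reach r t w} ≤ Set.ncard {w | reach r u w} :=
      hmin u (Relation.ReflTransGen.trans ht hu)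
    have heq := Set.eq_of_subset_of_ncard_le hsub hle (Set.toFinite _)
    have : t ∈ {w | reach r u w} := heq ▸ (Relation.ReflTransGen.refl)
    exact this
  refine ⟨{u | reach r t u}, ?_, t, Relation.ReflTransGen.refl, ht⟩
  intro s hs
  ext u
  constructor
  · intro hsu; exact Relation.ReflTransGen.trans hs hsu
  · intro hu; exact Relation.ReflTransGen.trans (hmax s hs) hu

lemma attractor_eq_of_mem {r : σ → σ → Prop} {A B : Set σ} (hA : IsAttractor r A)
    (hB : IsAttractor r B) {y : σ} (hyA : y ∈ A) (hyB : y ∈ B) : A = B :=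
  (hA y hyA).symm.trans (hB y hyB)

lemma basS_closed [Finite σ] (r : σ → σ → Prop) (A1 : Set σ) {x y : σ}
    (hx : x ∈ basS r A1) (hxy : r x y) : y ∈ basS r A1 := by
  have hnot : ∀ A' : Set σ, IsAttractor r A' → A' ≠ A1 → x ∉ basW r A' :=
    fun A' h1 h2 hmem => hx.2 (Set.mem_biUnion (⟨h1, h2⟩ :
      A' ∈ {B : Set σ | IsAttractor r B ∧ B ≠ A1}) hmem)
  obtain ⟨A', hA', t, htA', hyt⟩ := exists_attractor r y
  have hA'eq : A' = A1 := by
    by_contra hne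
    exact hnot A' hA' hne ⟨t, htA', Relation.ReflTransGen.head hxy hyt⟩
  constructor
  · exact ⟨t, hA'eq ▸ htA', hyt⟩
  · intro hyU
    obtain ⟨A'', hA'', hyA''⟩ := Set.mem_iUnion₂.mp hyU
    obtain ⟨u, hu, hyu⟩ := hyA''
    exact hnot A'' hA''.1 hA''.2 ⟨u, hu, Relation.ReflTransGen.head hxy hyu⟩

end Aux

section Proj

variable {V : Type*} [Fintype V] [DecidableEq V]

lemma proj_update {B : Set V} (s : V → Bool) {v : V} (hv : v ∈ B) (b : Bool) :
    proj B (Function.update s v b) = Function.update (proj B s) ⟨v, hv⟩ b := by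
  funext w
  rcases eq_or_ne w ⟨v, hv⟩ with h | h
  · subst h; simp [proj]
  · have h' : w.1 ≠ v := fun hh => h (Subtype.ext hh)
    simp [proj, Function.update_of_ne h, Function.update_of_ne h']

lemma proj_update_not_mem {B : Set V} (s : V → Bool) {v : V} (hv : v ∉ B) (b : Bool) :
    proj B (Function.update s v b) = proj B s := by
  funext w
  have h : w.1 ≠ v := fun h => hv (h ▸ w.2)
  simp [proj, Function.update_of_ne h]

lemma gstep_proj {f : (V → Bool) → V → Bool} {B1 : Set V} {s s' : V → Bool}
    (h : gstep f s s') :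
    lstep f B1 (proj B1 s) (proj B1 s') ∨ proj B1 s' = proj B1 s := by
  obtain ⟨v, rfl⟩ := h
  by_cases hv : v ∈ B1
  · exact Or.inl ⟨⟨v, hv⟩, s, rfl, (proj_update s hv _).symm ▸ rfl⟩
  · exact Or.inr (proj_update_not_mem s hv _)

lemma lstep_lift {f : (V → Bool) → V → Bool} {B1 : Set V} (hB1 : Elem f B1)
    {x y : {v // v ∈ B1} → Bool} (h : lstep f B1 x y)
    {s : V → Bool} (hs : proj B1 s = x) : ∃ s', gstep f s s' ∧ proj B1 s' = y := by
  obtain ⟨v, t, ht, rfl⟩ := h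
  refine ⟨Function.update s v.1 (f s v.1), ⟨v.1, rfl⟩, ?_⟩
  have hf : f s v.1 = f t v.1 := by
    refine hB1 v.1 v.2 s t (fun u hu => ?_)
    have h1 : proj B1 s ⟨u, hu⟩ = x ⟨u, hu⟩ := congrFun hs ⟨u, hu⟩
    have h2 : proj B1 t ⟨u, hu⟩ = x ⟨u, hu⟩ := congrFun ht ⟨u, hu⟩
    exact h1.trans h2.symm
  rw [proj_update s v.2, hs, hf]

lemma reach_gstep_proj {f : (V → Bool) → V → Bool} {B1 : Set V} {s s' : V → Bool}
    (h : reach (gstep f) s s') :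
    reach (lstep f B1) (proj B1 s) (proj B1 s') := by
  induction h with
  | refl => exact Relation.ReflTransGen.refl
  | tail hab hbc ih =>
      rcases gstep_proj (B1 := B1) hbc with h | h
      · exact ih.tail h
      · rwa [h]

lemma reach_lstep_lift {f : (V → Bool) → V → Bool} {B1 : Set V} (hB1 : Elem f B1)
    {x y : {v // v ∈ B1} → Bool} (h : reach (lstep f B1) x y)
    {s : V → Bool} (hs : proj B1 s = x) :
    ∃ s', reach (gstep f) s s' ∧ proj B1 s' = y := by
  induction h with
  | refl => exact ⟨s, Relation.ReflTransGen.refl, hs⟩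
  | tail hab hbc ih =>
      obtain ⟨s', hr, hp⟩ := ih
      obtain ⟨s'', hg, hp'⟩ := lstep_lift hB1 hbc hp
      exact ⟨s'', hr.tail hg, hp'⟩

end Proj

/-- Two blocks `B1` (elementary) and `B2` (non-elementary, with parent `B1`) covering all nodes:
`A` is an attractor of the global transition system iff `A|B1` is an attractor `A1` of `TS_{B1}`
and `A` is an attractor of `TS_2`, the transition system of `B2` generated by the strong basin
of `A1`. -/
theorem stmt14 (f : (V → Bool) → V → Bool) (B1 B2 : Set V)
    (hcov : B1 ∪ B2 = Set.univ) (hB1 : Elem f B1) (hB2 : ¬ Elem f B2)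
    (A : Set (V → Bool)) :
    IsAttractor (gstep f) A ↔
      (IsAttractor (lstep f B1) (proj B1 '' A) ∧
       IsAttractorOn {s | proj B1 s ∈ basS (lstep f B1) (proj B1 '' A)} (gstep f) A) := by
  set A1 : Set ({v // v ∈ B1} → Bool) := proj B1 '' A with hA1def
  set S : Set (V → Bool) := {s | proj B1 s ∈ basS (lstep f B1) A1} with hSdef
  constructor
  · intro hA
    have hclosed : ∀ a ∈ A, ∀ b, gstep f a b → b ∈ A := fun a ha b hb =>
      (hA a ha) ▸ (Relation.ReflTransGen.single hb : b ∈ {t | reach (gstep f) a t})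
    have ha : IsAttractor (lstep f B1) A1 := by
      rintro x ⟨s, hsA, rfl⟩
      ext y
      constructor
      · intro hy
        obtain ⟨s', hr, hp⟩ := reach_lstep_lift hB1 hy rfl
        exact ⟨s', (hA s hsA) ▸ (hr : s' ∈ {t | reach (gstep f) s t}), hp⟩
      · rintro ⟨t, htA, rfl⟩
        have hreach : reach (gstep f) s t :=
          ((hA s hsA).symm ▸ htA : t ∈ {u | reach (gstep f) s u})
        exact reach_gstep_proj hreach
    have hAS : A ⊆ S := by
      intro s hs
      constructor
      · exact ⟨proj B1 s, ⟨s, hs, rfl⟩, Relation.ReflTransGen.refl⟩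
      · intro hU
        obtain ⟨A', hA', hmem⟩ := Set.mem_iUnion₂.mp hU
        obtain ⟨u, huA', hreach⟩ := hmem
        have huA1 : u ∈ A1 :=
          (ha (proj B1 s) ⟨s, hs, rfl⟩) ▸
            (hreach : u ∈ {w | reach (lstep f B1) (proj B1 s) w})
        exact hA'.2 (attractor_eq_of_mem hA'.1 ha huA' huA1)
    refine ⟨ha, hAS, fun s hs => ?_⟩
    ext t
    constructor
    · intro ht
      exact (hA s hs) ▸
        (reach_mono (fun a b hab => hab.1) ht : t ∈ {u | reach (gstep f) s u})
    · intro ht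
      have hreach : reach (gstep f) s t :=
        ((hA s hs).symm ▸ ht : t ∈ {u | reach (gstep f) s u})
      exact (reach_restrict_of_closed hclosed hAS hs hreach).2
  · rintro ⟨hA1attr, hsub, hon⟩
    have hSclosed : ∀ a ∈ S, ∀ b, gstep f a b → b ∈ S := by
      intro a ha b hb
      rcases gstep_proj (B1 := B1) hb with h | h
      · exact basS_closed _ _ ha h
      · show proj B1 b ∈ basS (lstep f B1) A1
        rw [h]; exact ha
    intro s hs
    ext t
    constructor
    · intro ht
      have hr := (reach_restrict_of_closed hSclosed (subset_refl S) (hsub hs)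
        (ht : reach (gstep f) s t)).2
      exact (hon s hs) ▸ (hr : t ∈ {u | reach (rrestrict S (gstep f)) s u})
    · intro ht
      have hr : reach (rrestrict S (gstep f)) s t :=
        ((hon s hs).symm ▸ ht : t ∈ {u | reach (rrestrict S (gstep f)) s u})
      exact reach_mono (fun a b hab => hab.1) hr
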